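/- Let $f : \mathbb{R}^2 \to \mathbb{R}$ be $C^2$ and suppose that for every rectangle $R = [r_1,s_1]\times[r_2,s_2]$ with $r \le s$, the integrals of $\partial_1\partial_2 f$ over the upper-left triangle $T_1$ (above the diagonal from $(r_1,r_2)$ to $(s_1,s_2)$) and the lower-right triangle $T_2$ (below that diagonal) are equal. Then for all $r \le s$, $\int_{[r_1, \frac{r_1+s_1}{2}] \times [\frac{r_2+s_2}{2}, s_2]} \partial_1\partial_2 f = \int_{[\frac{r_1+s_1}{2}, s_1] \times [r_2, \frac{r_2+s_2}{2}]} \partial_1\partial_2 f$. -/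

import Mathlib

open MeasureTheory

/-- The mixed partial derivative `∂₁∂₂ f`. -/
noncomputable def mixedPartial (f : ℝ × ℝ → ℝ) : ℝ × ℝ → ℝ :=
  fun p => deriv (fun x => deriv (fun y => f (x, y)) p.2) p.1

/-- Upper-left triangle of the rectangle `[r₁,s₁] × [r₂,s₂]` cut by the
diagonal from `(r₁,r₂)` to `(s₁,s₂)`. -/
def upperTriangle (r s : ℝ × ℝ) : Set (ℝ × ℝ) :=
  {p | r.1 ≤ p.1 ∧ p.1 ≤ s.1 ∧ r.2 ≤ p.2 ∧ p.2 ≤ s.2 ∧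
    (p.1 - r.1) * (s.2 - r.2) ≤ (p.2 - r.2) * (s.1 - r.1)}

/-- Lower-right triangle of the rectangle `[r₁,s₁] × [r₂,s₂]` cut by the
diagonal from `(r₁,r₂)` to `(s₁,s₂)`. -/
def lowerTriangle (r s : ℝ × ℝ) : Set (ℝ × ℝ) :=
  {p | r.1 ≤ p.1 ∧ p.1 ≤ s.1 ∧ r.2 ≤ p.2 ∧ p.2 ≤ s.2 ∧
    (p.2 - r.2) * (s.1 - r.1) ≤ (p.1 - r.1) * (s.2 - r.2)}

lemma continuous_mixedPartial (f : ℝ × ℝ → ℝ) (hf : ContDiff ℝ 2 f) :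
    Continuous (mixedPartial f) := by
  set g : ℝ × ℝ → ℝ := fun p => fderiv ℝ f p (0, 1) with hgdef
  have hf1 : ContDiff ℝ 1 (fun p : ℝ × ℝ => fderiv ℝ f p) :=
    hf.fderiv_right (by norm_num)
  have hg : ContDiff ℝ 1 g :=
    ((ContinuousLinearMap.apply ℝ ℝ ((0, 1) : ℝ × ℝ)).contDiff).comp hf1
  have key : ∀ x y : ℝ, deriv (fun y' => f (x, y')) y = g (x, y) := by
    intro x y
    have h1 : HasFDerivAt f (fderiv ℝ f (x, y)) (x, y) :=
      ((hf.differentiable (by norm_num)) (x, y)).hasFDerivAt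
    have h2 : HasDerivAt (fun y' => ((x, y') : ℝ × ℝ)) (0, 1) y :=
      (hasDerivAt_const y x).prodMk (hasDerivAt_id y)
    exact (h1.comp_hasDerivAt y h2).deriv
  have hmp : mixedPartial f = fun p => fderiv ℝ g p (1, 0) := by
    funext p
    obtain ⟨x, y⟩ := p
    show deriv (fun x' => deriv (fun y' => f (x', y')) y) x = _
    simp only [key]
    have h1 : HasFDerivAt g (fderiv ℝ g (x, y)) (x, y) :=
      ((hg.differentiable one_ne_zero) (x, y)).hasFDerivAt
    have h2 : HasDerivAt (fun x' => ((x', y) : ℝ × ℝ)) (1, 0) x :=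
      (hasDerivAt_id x).prodMk (hasDerivAt_const x y)
    exact (h1.comp_hasDerivAt x h2).deriv
  rw [hmp]
  exact (ContinuousLinearMap.apply ℝ ℝ ((1, 0) : ℝ × ℝ)).continuous.comp
    (hg.continuous_fderiv one_ne_zero)

lemma upper_decomp (a1 a2 b1 b2 : ℝ) (h1 : a1 ≤ b1) (h2 : a2 ≤ b2) :
    upperTriangle (a1, a2) (b1, b2) =
      upperTriangle (a1, a2) ((a1 + b1) / 2, (a2 + b2) / 2) ∪
        (Set.Icc a1 ((a1 + b1) / 2) ×ˢ Set.Icc ((a2 + b2) / 2) b2 ∪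
          upperTriangle ((a1 + b1) / 2, (a2 + b2) / 2) (b1, b2)) := by
  ext ⟨x, y⟩
  simp only [upperTriangle, Set.mem_setOf_eq, Set.mem_union, Set.mem_prod, Set.mem_Icc]
  constructor
  · rintro ⟨hx1, hx2, hy1, hy2, hd⟩
    by_cases hx : x ≤ (a1 + b1) / 2
    · by_cases hy : (a2 + b2) / 2 ≤ y
      · exact Or.inr (Or.inl ⟨⟨hx1, hx⟩, hy, hy2⟩)
      · push_neg at hy
        refine Or.inl ⟨hx1, hx, hy1, hy.le, ?_⟩
        nlinarith
    · push_neg at hx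
      have hy : (a2 + b2) / 2 ≤ y := by nlinarith
      exact Or.inr (Or.inr ⟨hx.le, hx2, hy, hy2, by nlinarith⟩)
  · rintro (⟨hx1, hx2, hy1, hy2, hd⟩ | ⟨⟨hx1, hx2⟩, hy1, hy2⟩ | ⟨hx1, hx2, hy1, hy2, hd⟩)
    · exact ⟨hx1, by linarith, hy1, by linarith, by nlinarith⟩
    · exact ⟨hx1, by linarith, by linarith, hy2, by nlinarith⟩
    · exact ⟨by linarith, hx2, by linarith, hy2, by nlinarith⟩

lemma lower_decomp (a1 a2 b1 b2 : ℝ) (h1 : a1 ≤ b1) (h2 : a2 ≤ b2) :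
    lowerTriangle (a1, a2) (b1, b2) =
      lowerTriangle (a1, a2) ((a1 + b1) / 2, (a2 + b2) / 2) ∪
        (Set.Icc ((a1 + b1) / 2) b1 ×ˢ Set.Icc a2 ((a2 + b2) / 2) ∪
          lowerTriangle ((a1 + b1) / 2, (a2 + b2) / 2) (b1, b2)) := by
  ext ⟨x, y⟩
  simp only [lowerTriangle, Set.mem_setOf_eq, Set.mem_union, Set.mem_prod, Set.mem_Icc]
  constructor
  · rintro ⟨hx1, hx2, hy1, hy2, hd⟩
    by_cases hy : y ≤ (a2 + b2) / 2
    · by_cases hx : (a1 + b1) / 2 ≤ x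
      · exact Or.inr (Or.inl ⟨⟨hx, hx2⟩, hy1, hy⟩)
      · push_neg at hx
        refine Or.inl ⟨hx1, hx.le, hy1, hy, ?_⟩
        nlinarith
    · push_neg at hy
      have hx : (a1 + b1) / 2 ≤ x := by nlinarith
      exact Or.inr (Or.inr ⟨hx, hx2, hy.le, hy2, by nlinarith⟩)
  · rintro (⟨hx1, hx2, hy1, hy2, hd⟩ | ⟨⟨hx1, hx2⟩, hy1, hy2⟩ | ⟨hx1, hx2, hy1, hy2, hd⟩)
    · exact ⟨hx1, by linarith, hy1, by linarith, by nlinarith⟩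
    · exact ⟨by linarith, hx2, hy1, by linarith, by nlinarith⟩
    · exact ⟨by linarith, hx2, by linarith, hy2, by nlinarith⟩

lemma isCompact_upperTriangle (r s : ℝ × ℝ) : IsCompact (upperTriangle r s) := by
  have hclosed : IsClosed (upperTriangle r s) := by
    unfold upperTriangle
    refine IsClosed.inter (isClosed_le continuous_const continuous_fst) ?_
    refine IsClosed.inter (isClosed_le continuous_fst continuous_const) ?_
    refine IsClosed.inter (isClosed_le continuous_const continuous_snd) ?_
    refine IsClosed.inter (isClosed_le continuous_snd continuous_const) ?_
    exact isClosed_le ((continuous_fst.sub continuous_const).mul continuous_const)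
      ((continuous_snd.sub continuous_const).mul continuous_const)
  refine IsCompact.of_isClosed_subset (isCompact_Icc (a := r) (b := s)) hclosed ?_
  rintro ⟨x, y⟩ ⟨h1, h2, h3, h4, _⟩
  exact ⟨⟨h1, h3⟩, ⟨h2, h4⟩⟩

lemma isCompact_lowerTriangle (r s : ℝ × ℝ) : IsCompact (lowerTriangle r s) := by
  have hclosed : IsClosed (lowerTriangle r s) := by
    unfold lowerTriangle
    refine IsClosed.inter (isClosed_le continuous_const continuous_fst) ?_
    refine IsClosed.inter (isClosed_le continuous_fst continuous_const) ?_
    refine IsClosed.inter (isClosed_le continuous_const continuous_snd) ?_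
    refine IsClosed.inter (isClosed_le continuous_snd continuous_const) ?_
    exact isClosed_le ((continuous_snd.sub continuous_const).mul continuous_const)
      ((continuous_fst.sub continuous_const).mul continuous_const)
  refine IsCompact.of_isClosed_subset (isCompact_Icc (a := r) (b := s)) hclosed ?_
  rintro ⟨x, y⟩ ⟨h1, h2, h3, h4, _⟩
  exact ⟨⟨h1, h3⟩, ⟨h2, h4⟩⟩

lemma vline_null (a : ℝ) : MeasureTheory.volume {p : ℝ × ℝ | p.1 = a} = 0 := by
  have : {p : ℝ × ℝ | p.1 = a} = {a} ×ˢ (Set.univ : Set ℝ) := by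
    ext ⟨x, y⟩; simp [eq_comm]
  rw [this, show (MeasureTheory.volume : Measure (ℝ × ℝ)) =
    (volume : Measure ℝ).prod volume from rfl, Measure.prod_prod]
  simp

lemma hline_null (a : ℝ) : MeasureTheory.volume {p : ℝ × ℝ | p.2 = a} = 0 := by
  have : {p : ℝ × ℝ | p.2 = a} = (Set.univ : Set ℝ) ×ˢ {a} := by
    ext ⟨x, y⟩; simp [eq_comm]
  rw [this, show (MeasureTheory.volume : Measure (ℝ × ℝ)) =
    (volume : Measure ℝ).prod volume from rfl, Measure.prod_prod]
  simp

theorem quarter_rectangle_integrals_eq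
    (f : ℝ × ℝ → ℝ) (hf : ContDiff ℝ 2 f)
    (h : ∀ r s : ℝ × ℝ, r.1 ≤ s.1 → r.2 ≤ s.2 →
      (∫ p in upperTriangle r s, mixedPartial f p) =
        ∫ p in lowerTriangle r s, mixedPartial f p) :
    ∀ r s : ℝ × ℝ, r.1 ≤ s.1 → r.2 ≤ s.2 →
      (∫ p in Set.Icc r.1 ((r.1 + s.1) / 2) ×ˢ Set.Icc ((r.2 + s.2) / 2) s.2,
          mixedPartial f p) =
        ∫ p in Set.Icc ((r.1 + s.1) / 2) s.1 ×ˢ Set.Icc r.2 ((r.2 + s.2) / 2),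
          mixedPartial f p := by
  rintro ⟨a1, a2⟩ ⟨b1, b2⟩ h1 h2
  simp only at h1 h2 ⊢
  set m1 : ℝ := (a1 + b1) / 2 with hm1
  set m2 : ℝ := (a2 + b2) / 2 with hm2
  have hm1l : a1 ≤ m1 := by rw [hm1]; linarith
  have hm1r : m1 ≤ b1 := by rw [hm1]; linarith
  have hm2l : a2 ≤ m2 := by rw [hm2]; linarith
  have hm2r : m2 ≤ b2 := by rw [hm2]; linarith
  have hc := continuous_mixedPartial f hf
  -- quarter rectangles as Icc in the product
  have hQ1 : Set.Icc a1 m1 ×ˢ Set.Icc m2 b2 = Set.Icc ((a1, m2) : ℝ × ℝ) (m1, b2) :=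
    Set.Icc_prod_Icc _ _ _ _
  have hQ2 : Set.Icc m1 b1 ×ˢ Set.Icc a2 m2 = Set.Icc ((m1, a2) : ℝ × ℝ) (b1, m2) :=
    Set.Icc_prod_Icc _ _ _ _
  -- integrability
  have iU1 : IntegrableOn (mixedPartial f) (upperTriangle (a1, a2) (m1, m2)) :=
    hc.continuousOn.integrableOn_compact (isCompact_upperTriangle _ _)
  have iU2 : IntegrableOn (mixedPartial f) (upperTriangle (m1, m2) (b1, b2)) :=
    hc.continuousOn.integrableOn_compact (isCompact_upperTriangle _ _)
  have iL1 : IntegrableOn (mixedPartial f) (lowerTriangle (a1, a2) (m1, m2)) :=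
    hc.continuousOn.integrableOn_compact (isCompact_lowerTriangle _ _)
  have iL2 : IntegrableOn (mixedPartial f) (lowerTriangle (m1, m2) (b1, b2)) :=
    hc.continuousOn.integrableOn_compact (isCompact_lowerTriangle _ _)
  have iQ1 : IntegrableOn (mixedPartial f) (Set.Icc a1 m1 ×ˢ Set.Icc m2 b2) := by
    rw [hQ1]; exact hc.continuousOn.integrableOn_compact isCompact_Icc
  have iQ2 : IntegrableOn (mixedPartial f) (Set.Icc m1 b1 ×ˢ Set.Icc a2 m2) := by
    rw [hQ2]; exact hc.continuousOn.integrableOn_compact isCompact_Icc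
  -- null measurability
  have nU2 : NullMeasurableSet (upperTriangle (m1, m2) (b1, b2)) volume :=
    (isCompact_upperTriangle _ _).isClosed.measurableSet.nullMeasurableSet
  have nL2 : NullMeasurableSet (lowerTriangle (m1, m2) (b1, b2)) volume :=
    (isCompact_lowerTriangle _ _).isClosed.measurableSet.nullMeasurableSet
  have nQ1 : NullMeasurableSet (Set.Icc a1 m1 ×ˢ Set.Icc m2 b2) volume := by
    rw [hQ1]; exact measurableSet_Icc.nullMeasurableSet
  have nQ2 : NullMeasurableSet (Set.Icc m1 b1 ×ˢ Set.Icc a2 m2) volume := by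
    rw [hQ2]; exact measurableSet_Icc.nullMeasurableSet
  -- a.e. disjointness
  have dU : AEDisjoint volume (upperTriangle (a1, a2) (m1, m2))
      (Set.Icc a1 m1 ×ˢ Set.Icc m2 b2 ∪ upperTriangle (m1, m2) (b1, b2)) := by
    refine measure_mono_null ?_
      (measure_union_null (hline_null m2) (vline_null m1))
    rintro ⟨x, y⟩ ⟨⟨_, hx, _, hy, _⟩, (⟨⟨_, _⟩, hy', _⟩ | ⟨hx', _, _, _, _⟩)⟩
    · exact Or.inl (le_antisymm hy hy')
    · exact Or.inr (le_antisymm hx hx')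
  have dU' : AEDisjoint volume (Set.Icc a1 m1 ×ˢ Set.Icc m2 b2)
      (upperTriangle (m1, m2) (b1, b2)) := by
    refine measure_mono_null ?_ (vline_null m1)
    rintro ⟨x, y⟩ ⟨⟨⟨_, hx⟩, _, _⟩, ⟨hx', _, _, _, _⟩⟩
    exact le_antisymm hx hx'
  have dL : AEDisjoint volume (lowerTriangle (a1, a2) (m1, m2))
      (Set.Icc m1 b1 ×ˢ Set.Icc a2 m2 ∪ lowerTriangle (m1, m2) (b1, b2)) := by
    refine measure_mono_null ?_
      (measure_union_null (vline_null m1) (hline_null m2))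
    rintro ⟨x, y⟩ ⟨⟨_, hx, _, hy, _⟩, (⟨⟨hx', _⟩, _, _⟩ | ⟨_, _, hy', _, _⟩)⟩
    · exact Or.inl (le_antisymm hx hx')
    · exact Or.inr (le_antisymm hy hy')
  have dL' : AEDisjoint volume (Set.Icc m1 b1 ×ˢ Set.Icc a2 m2)
      (lowerTriangle (m1, m2) (b1, b2)) := by
    refine measure_mono_null ?_ (hline_null m2)
    rintro ⟨x, y⟩ ⟨⟨_, _, hy⟩, ⟨_, _, hy', _, _⟩⟩
    exact le_antisymm hy hy'
  -- decompose the big triangle integrals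
  have eU : (∫ p in upperTriangle (a1, a2) (b1, b2), mixedPartial f p) =
      (∫ p in upperTriangle (a1, a2) (m1, m2), mixedPartial f p) +
        ((∫ p in Set.Icc a1 m1 ×ˢ Set.Icc m2 b2, mixedPartial f p) +
          ∫ p in upperTriangle (m1, m2) (b1, b2), mixedPartial f p) := by
    rw [upper_decomp a1 a2 b1 b2 h1 h2,
      integral_union_ae dU (nQ1.union nU2) iU1 (iQ1.union iU2),
      integral_union_ae dU' nU2 iQ1 iU2]
  have eL : (∫ p in lowerTriangle (a1, a2) (b1, b2), mixedPartial f p) =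
      (∫ p in lowerTriangle (a1, a2) (m1, m2), mixedPartial f p) +
        ((∫ p in Set.Icc m1 b1 ×ˢ Set.Icc a2 m2, mixedPartial f p) +
          ∫ p in lowerTriangle (m1, m2) (b1, b2), mixedPartial f p) := by
    rw [lower_decomp a1 a2 b1 b2 h1 h2,
      integral_union_ae dL (nQ2.union nL2) iL1 (iQ2.union iL2),
      integral_union_ae dL' nL2 iQ2 iL2]
  have hbig := h (a1, a2) (b1, b2) h1 h2
  have hll := h (a1, a2) (m1, m2) hm1l hm2l
  have hur := h (m1, m2) (b1, b2) hm1r hm2r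
  rw [eU, eL] at hbig
  linarith
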